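/- For all n ≥ 1 and 0 ≤ k ≤ n-1, the number of k-Naples parking functions satisfies |PF_{n,k}| ≤ (k+1)(k+n+1)^{n-1}, with equality only if k = 0. -/

import Mathlib

/-- The first unoccupied spot `s` with `p ≤ s ≤ n`, if any. -/
def forwardSpot (n : ℕ) (occ : Finset ℕ) (p : ℕ) : Option ℕ :=
  (List.range' p (n + 1 - p)).find? (fun s => decide (s ∉ occ))

/-- Classical (forward-only) parking process: cars park one by one, each at the
first free spot `≥` its preference; returns the final occupied set if all park. -/
def classicalPark (n : ℕ) : List ℕ → Finset ℕ → Option (Finset ℕ)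
  | [], occ => some occ
  | p :: rest, occ =>
    match forwardSpot n occ p with
    | none => none
    | some s => classicalPark n rest (insert s occ)

/-- Backward candidates `p-1, p-2, …, p-k` that are at least `1`. -/
def backwardCandidates (k p : ℕ) : List ℕ :=
  ((List.range k).map (fun i => p - (i + 1))).filter (fun s => decide (1 ≤ s))

/-- The spot where a car with preference `p` parks under the `k`-Naples rule. -/
def naplesSpot (n k : ℕ) (occ : Finset ℕ) (p : ℕ) : Option ℕ :=
  if p ∈ occ then
    match (backwardCandidates k p).find? (fun s => decide (s ∉ occ)) with
    | some s => some s
    | none => forwardSpot n occ p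
  else some p

/-- `k`-Naples parking process; returns the final occupied set if all cars park. -/
def naplesPark (n k : ℕ) : List ℕ → Finset ℕ → Option (Finset ℕ)
  | [], occ => some occ
  | p :: rest, occ =>
    match naplesSpot n k occ p with
    | none => none
    | some s => naplesPark n k rest (insert s occ)

/-- All cars park under the `k`-Naples rule and no car with preference `p ≤ k`
finds all of `1, …, p` occupied (no car exits the lot searching backward). -/
def naplesContainedAux (n k : ℕ) : List ℕ → Finset ℕ → Bool
  | [], _ => true
  | p :: rest, occ =>
    (decide (p ≤ k → ¬ Finset.Icc 1 p ⊆ occ)) &&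
    match naplesSpot n k occ p with
    | none => false
    | some s => naplesContainedAux n k rest (insert s occ)

/-- The (1-based) preference list of `a : Fin m → Fin n`. -/
def prefList {m n : ℕ} (a : Fin m → Fin n) : List ℕ :=
  (List.ofFn a).map (fun x => (x : ℕ) + 1)

/-- The set of classical `(m,n)`-parking functions. -/
def PFset (m n : ℕ) : Finset (Fin m → Fin n) :=
  Finset.univ.filter (fun a => (classicalPark n (prefList a) ∅).isSome)

/-- The set of `k`-Naples `(m,n)`-parking functions. -/
def NPFset (m n k : ℕ) : Finset (Fin m → Fin n) :=
  Finset.univ.filter (fun a => (naplesPark n k (prefList a) ∅).isSome)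

/-- The set of contained `k`-Naples `(m,n)`-parking functions. -/
def Bset (m n k : ℕ) : Finset (Fin m → Fin n) :=
  Finset.univ.filter (fun a => naplesContainedAux n k (prefList a) ∅)

/-- The set of `k`-left obstructed `(m,n)`-parking functions: `m` cars on
`n + k` spots whose first `k` spots are obstructed, forward-only rule. -/
def LPFset (m n k : ℕ) : Finset (Fin m → Fin (n + k)) :=
  Finset.univ.filter (fun a => (classicalPark (n + k) (prefList a) (Finset.Icc 1 k)).isSome)

section Helpers

lemma find?_range'_min {q : ℕ → Bool} : ∀ {l a x : ℕ}, (List.range' a l).find? q = some x →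
    ∀ y, a ≤ y → y < x → q y = false := by
  intro l
  induction l with
  | zero => intro a x h; simp at h
  | succ l ih =>
    intro a x h y hay hyx
    rw [List.range'_succ] at h
    by_cases hq : q a
    · rw [List.find?_cons_of_pos hq] at h
      cases h; omega
    · rw [List.find?_cons_of_neg hq] at h
      rcases Nat.eq_or_lt_of_le hay with rfl | hlt
      · simpa using hq
      · exact ih h y hlt hyx

lemma find?_range'_eq_some_of {q : ℕ → Bool} : ∀ {l a x : ℕ}, a ≤ x → x < a + l → q x = true →
    (∀ y, a ≤ y → y < x → q y = false) → (List.range' a l).find? q = some x := by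
  intro l
  induction l with
  | zero => intro a x h1 h2; omega
  | succ l ih =>
    intro a x h1 h2 hq hmin
    rw [List.range'_succ]
    rcases Nat.eq_or_lt_of_le h1 with rfl | hlt
    · exact List.find?_cons_of_pos hq
    · rw [List.find?_cons_of_neg (by simp [hmin a le_rfl hlt])]
      exact ih hlt (by omega) hq (fun y hy hyx => hmin y (by omega) hyx)

lemma forwardSpot_eq_some {n : ℕ} {occ : Finset ℕ} {p s : ℕ} (h : forwardSpot n occ p = some s) :
    p ≤ s ∧ s ≤ n ∧ s ∉ occ ∧ ∀ y, p ≤ y → y < s → y ∈ occ := by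
  unfold forwardSpot at h
  have hmem := List.mem_of_find?_eq_some h
  have hpred := List.find?_some h
  rw [List.mem_range'_1] at hmem
  have hnz : n + 1 - p ≠ 0 := by
    intro h0; rw [h0] at h; simp at h
  refine ⟨hmem.1, by omega, by simpa using hpred, fun y hy hyx => ?_⟩
  have := find?_range'_min h y hy hyx
  simpa using this

lemma forwardSpot_eq_none {n : ℕ} {occ : Finset ℕ} {p : ℕ} (h : forwardSpot n occ p = none) :
    ∀ y, p ≤ y → y ≤ n → y ∈ occ := by
  unfold forwardSpot at h
  rw [List.find?_eq_none] at h
  intro y hy hyn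
  have := h y (by rw [List.mem_range'_1]; omega)
  simpa using this

lemma forwardSpot_eq_some_of {n : ℕ} {occ : Finset ℕ} {p s : ℕ} (h1 : p ≤ s) (h2 : s ≤ n)
    (h3 : s ∉ occ) (h4 : ∀ y, p ≤ y → y < s → y ∈ occ) : forwardSpot n occ p = some s := by
  unfold forwardSpot
  exact find?_range'_eq_some_of h1 (by omega) (by simpa using h3)
    (fun y hy hyx => by simpa using h4 y hy hyx)

lemma naplesSpot_eq_some {n k : ℕ} {occ : Finset ℕ} {p s : ℕ} (hp1 : 1 ≤ p) (hpn : p ≤ n)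
    (h : naplesSpot n k occ p = some s) :
    s ∉ occ ∧ 1 ≤ s ∧ s ≤ n ∧ p ≤ s + k := by
  unfold naplesSpot at h
  by_cases hp : p ∈ occ
  · rw [if_pos hp] at h
    rcases hb : (backwardCandidates k p).find? (fun s => decide (s ∉ occ)) with _ | t
    · rw [hb] at h
      have := forwardSpot_eq_some h
      exact ⟨this.2.2.1, by omega, this.2.1, by omega⟩
    · rw [hb] at h
      have hmem := List.mem_of_find?_eq_some hb
      have hpred := List.find?_some hb
      unfold backwardCandidates at hmem
      rw [List.mem_filter] at hmem
      obtain ⟨hmem1, hmem2⟩ := hmem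
      rw [List.mem_map] at hmem1
      obtain ⟨i, hi, rfl⟩ := hmem1
      rw [List.mem_range] at hi
      have h1 : 1 ≤ p - (i+1) := by simpa using hmem2
      cases h
      exact ⟨by simpa using hpred, h1, by omega, by omega⟩
  · rw [if_neg hp] at h
    cases h
    exact ⟨hp, hp1, hpn, by omega⟩

lemma naplesSpot_eq_none_of_full {n k : ℕ} {occ : Finset ℕ} {p : ℕ} (hp1 : 1 ≤ p) (hpn : p ≤ n)
    (hkp : k < p) (hfull : ∀ y, p - k ≤ y → y ≤ n → y ∈ occ) : naplesSpot n k occ p = none := by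
  unfold naplesSpot
  rw [if_pos (hfull p (by omega) hpn)]
  have hb : (backwardCandidates k p).find? (fun s => decide (s ∉ occ)) = none := by
    rw [List.find?_eq_none]
    intro x hx
    unfold backwardCandidates at hx
    rw [List.mem_filter] at hx
    obtain ⟨hx1, hx2⟩ := hx
    rw [List.mem_map] at hx1
    obtain ⟨i, hi, rfl⟩ := hx1
    rw [List.mem_range] at hi
    have h1 : 1 ≤ p - (i+1) := by simpa using hx2
    simpa using hfull _ (by omega) (by omega)
  rw [hb]
  unfold forwardSpot
  rw [List.find?_eq_none]
  intro y hy
  rw [List.mem_range'_1] at hy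
  simpa using hfull y (by omega) (by omega)

end Helpers
section PartA

lemma naples_to_classical (n k : ℕ) : ∀ (L : List ℕ), (∀ p ∈ L, 1 ≤ p ∧ p ≤ n) →
    ∀ (occN occC : Finset ℕ), occN ⊆ Finset.Icc 1 n →
    (∀ q : ℕ, (occC.filter (fun x => q ≤ x)).card ≤ (occN.filter (fun x => q - k ≤ x)).card) →
    (naplesPark n k L occN).isSome → (classicalPark (n+k) L occC).isSome := by
  intro L
  induction L with
  | nil => intro _ occN occC _ _ _; simp [classicalPark]
  | cons p L ih =>
    intro hL occN occC hsub hinv hN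
    obtain ⟨⟨hp1, hpn⟩, hL'⟩ : (1 ≤ p ∧ p ≤ n) ∧ ∀ q ∈ L, 1 ≤ q ∧ q ≤ n :=
      ⟨hL p (by simp), fun q hq => hL q (by simp [hq])⟩
    rw [naplesPark] at hN
    rcases hns : naplesSpot n k occN p with _ | sN
    · rw [hns] at hN; simp at hN
    rw [hns] at hN
    obtain ⟨hsN_not, hsN1, hsNn, hsNk⟩ := naplesSpot_eq_some hp1 hpn hns
    rw [classicalPark]
    rcases hfs : forwardSpot (n+k) occC p with _ | sC
    · -- classical failure: derive contradiction with hns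
      exfalso
      have hfull := forwardSpot_eq_none hfs
      have hCge : n + k + 1 - p ≤ (occC.filter (fun x => p ≤ x)).card := by
        have hss : Finset.Icc p (n+k) ⊆ occC.filter (fun x => p ≤ x) := by
          intro y hy
          rw [Finset.mem_Icc] at hy
          exact Finset.mem_filter.2 ⟨hfull y hy.1 hy.2, hy.1⟩
        calc n + k + 1 - p = (Finset.Icc p (n+k)).card := by rw [Nat.card_Icc]
          _ ≤ _ := Finset.card_le_card hss
      have hNle : (occN.filter (fun x => p - k ≤ x)).card ≤ n + 1 - max 1 (p-k) := by
        have hss : occN.filter (fun x => p - k ≤ x) ⊆ Finset.Icc (max 1 (p-k)) n := by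
          intro y hy
          rw [Finset.mem_filter] at hy
          have := Finset.mem_Icc.1 (hsub hy.1)
          rw [Finset.mem_Icc]
          omega
        calc _ ≤ (Finset.Icc (max 1 (p-k)) n).card := Finset.card_le_card hss
          _ = _ := by rw [Nat.card_Icc]
      have hchain := le_trans hCge (le_trans (hinv p) hNle)
      have hkp : k < p := by omega
      have hfullN : ∀ y, p - k ≤ y → y ≤ n → y ∈ occN := by
        have hmax : max 1 (p - k) = p - k := by omega
        rw [hmax] at hNle hchain
        have heq : occN.filter (fun x => p - k ≤ x) = Finset.Icc (p-k) n := by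
          apply Finset.eq_of_subset_of_card_le
          · intro y hy
            rw [Finset.mem_filter] at hy
            have := Finset.mem_Icc.1 (hsub hy.1)
            rw [Finset.mem_Icc]; omega
          · rw [Nat.card_Icc]
            exact le_trans (by omega) (hinv p)
        intro y h1 h2
        have : y ∈ Finset.Icc (p-k) n := Finset.mem_Icc.2 ⟨h1, h2⟩
        rw [← heq] at this
        exact (Finset.mem_filter.1 this).1
      rw [naplesSpot_eq_none_of_full hp1 hpn hkp hfullN] at hns
      exact nomatch hns
    · -- both park; maintain invariant
      obtain ⟨hpsC, hsCnk, hsC_not, hsC_occ⟩ := forwardSpot_eq_some hfs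
      apply ih hL' (insert sN occN) (insert sC occC)
      · intro y hy
        rcases Finset.mem_insert.1 hy with rfl | hy'
        · rw [Finset.mem_Icc]; omega
        · exact hsub hy'
      · intro q
        have hCq : ((insert sC occC).filter (fun x => q ≤ x)).card
            = (occC.filter (fun x => q ≤ x)).card + (if q ≤ sC then 1 else 0) := by
          rw [Finset.filter_insert]
          by_cases hq : q ≤ sC
          · rw [if_pos hq, if_pos hq, Finset.card_insert_of_notMem]
            intro hmem
            exact hsC_not (Finset.mem_filter.1 hmem).1
          · rw [if_neg hq, if_neg hq, Nat.add_zero]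
        have hNq : ((insert sN occN).filter (fun x => q - k ≤ x)).card
            = (occN.filter (fun x => q - k ≤ x)).card + (if q - k ≤ sN then 1 else 0) := by
          rw [Finset.filter_insert]
          by_cases hq : q - k ≤ sN
          · rw [if_pos hq, if_pos hq, Finset.card_insert_of_notMem]
            intro hmem
            exact hsN_not (Finset.mem_filter.1 hmem).1
          · rw [if_neg hq, if_neg hq, Nat.add_zero]
        rw [hCq, hNq]
        by_cases hq1 : q ≤ sC
        · by_cases hq2 : q - k ≤ sN
          · rw [if_pos hq1, if_pos hq2]
            exact Nat.add_le_add_right (hinv q) 1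
          · -- bad case: show (occC.filter (q ≤ ·)).card + 1 ≤ (occN.filter (q-k ≤ ·)).card
            rw [if_pos hq1, if_neg hq2, Nat.add_zero]
            have hsNq : sN + k < q := by omega
            have hpq : p < q := by omega
            -- C(p) ≥ (q - p) + C(q)
            have h1 : (q - p) + (occC.filter (fun x => q ≤ x)).card
                ≤ (occC.filter (fun x => p ≤ x)).card := by
              have hsplit : Finset.Icc p (q-1) ∪ occC.filter (fun x => q ≤ x)
                  ⊆ occC.filter (fun x => p ≤ x) := by
                intro y hy
                rcases Finset.mem_union.1 hy with hy' | hy'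
                · rw [Finset.mem_Icc] at hy'
                  refine Finset.mem_filter.2 ⟨hsC_occ y hy'.1 (by omega), hy'.1⟩
                · rw [Finset.mem_filter] at hy' ⊢
                  exact ⟨hy'.1, by omega⟩
              have hdisj : Disjoint (Finset.Icc p (q-1)) (occC.filter (fun x => q ≤ x)) := by
                rw [Finset.disjoint_left]
                intro y hy1 hy2
                rw [Finset.mem_Icc] at hy1
                rw [Finset.mem_filter] at hy2
                omega
              calc (q - p) + (occC.filter (fun x => q ≤ x)).card
                  = (Finset.Icc p (q-1)).card + (occC.filter (fun x => q ≤ x)).card := by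
                    rw [Nat.card_Icc]; congr 1; omega
                _ = (Finset.Icc p (q-1) ∪ occC.filter (fun x => q ≤ x)).card :=
                    (Finset.card_union_of_disjoint hdisj).symm
                _ ≤ _ := Finset.card_le_card hsplit
            -- N(p-k) ≤ (q - k - max 1 (p-k) - 1) + N(q-k)
            have h2 : (occN.filter (fun x => p - k ≤ x)).card
                ≤ ((Finset.Icc (max 1 (p-k)) (q-k-1)).card - 1)
                  + (occN.filter (fun x => q - k ≤ x)).card := by
              have hsplit : occN.filter (fun x => p - k ≤ x)
                  ⊆ (Finset.Icc (max 1 (p-k)) (q-k-1)).erase sN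
                    ∪ occN.filter (fun x => q - k ≤ x) := by
                intro y hy
                rw [Finset.mem_filter] at hy
                have hyIcc := Finset.mem_Icc.1 (hsub hy.1)
                by_cases hyq : q - k ≤ y
                · exact Finset.mem_union_right _ (Finset.mem_filter.2 ⟨hy.1, hyq⟩)
                · refine Finset.mem_union_left _ (Finset.mem_erase.2 ⟨?_, ?_⟩)
                  · rintro rfl; exact hsN_not hy.1
                  · rw [Finset.mem_Icc]; omega
              have hsNmem : sN ∈ Finset.Icc (max 1 (p-k)) (q-k-1) := by
                rw [Finset.mem_Icc]; omega
              calc (occN.filter (fun x => p - k ≤ x)).card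
                  ≤ ((Finset.Icc (max 1 (p-k)) (q-k-1)).erase sN
                      ∪ occN.filter (fun x => q - k ≤ x)).card := Finset.card_le_card hsplit
                _ ≤ ((Finset.Icc (max 1 (p-k)) (q-k-1)).erase sN).card
                      + (occN.filter (fun x => q - k ≤ x)).card := Finset.card_union_le _ _
                _ = _ := by rw [Finset.card_erase_of_mem hsNmem]
            have h3 := hinv p
            have hIccCard : (Finset.Icc (max 1 (p-k)) (q-k-1)).card = q - k - max 1 (p-k) := by
              rw [Nat.card_Icc]; omega
            rw [hIccCard] at h2
            have hmax : (p ≤ k ∧ max 1 (p-k) = 1) ∨ (k < p ∧ max 1 (p-k) = p - k) := by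
              rcases le_or_gt p k with h | h
              · left; exact ⟨h, by omega⟩
              · right; exact ⟨h, by omega⟩
            rcases hmax with ⟨hpk, hm⟩ | ⟨hpk, hm⟩ <;> rw [hm] at h2 <;> omega
        · rw [if_neg hq1, Nat.add_zero]
          exact le_trans (hinv q) (Nat.le_add_right _ _)
      · exact hN

end PartA
section Circ

def circSpot (M : ℕ) (occ : Finset (ZMod M)) (p : ZMod M) : Option (ZMod M) :=
  ((List.range M).map (fun j : ℕ => p + (j : ZMod M))).find? (fun s => decide (s ∉ occ))

def circPark (M : ℕ) : List (ZMod M) → Finset (ZMod M) → Option (Finset (ZMod M))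
  | [], occ => some occ
  | p :: rest, occ =>
    match circSpot M occ p with
    | none => none
    | some s => circPark M rest (insert s occ)

lemma circSpot_isSome {M : ℕ} [NeZero M] {occ : Finset (ZMod M)} (h : occ.card < M)
    (p : ZMod M) : ∃ s, circSpot M occ p = some s ∧ s ∉ occ := by
  have hex : ∃ s : ZMod M, s ∉ occ := by
    by_contra hc
    push_neg at hc
    have : (Finset.univ : Finset (ZMod M)) ⊆ occ := fun x _ => hc x
    have := Finset.card_le_card this
    rw [Finset.card_univ, ZMod.card] at this
    omega
  obtain ⟨s, hs⟩ := hex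
  have hmem : s ∈ (List.range M).map (fun j : ℕ => p + (j : ZMod M)) := by
    rw [List.mem_map]
    refine ⟨(s - p).val, ?_, ?_⟩
    · exact List.mem_range.2 (ZMod.val_lt (s - p))
    · simp [ZMod.natCast_val, ZMod.cast_id]
  have : ((List.range M).map (fun j : ℕ => p + (j : ZMod M))).find?
      (fun s => decide (s ∉ occ)) |>.isSome := by
    rw [List.find?_isSome]
    exact ⟨s, hmem, by simpa using hs⟩
  rcases hfind : circSpot M occ p with _ | t
  · unfold circSpot at hfind; rw [hfind] at this; simp at this
  · refine ⟨t, rfl, ?_⟩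
    unfold circSpot at hfind
    simpa using List.find?_some hfind

lemma circPark_total {M : ℕ} [NeZero M] : ∀ (L : List (ZMod M)) (occ : Finset (ZMod M)),
    occ.card + L.length ≤ M → ∃ r, circPark M L occ = some r ∧ r.card = occ.card + L.length := by
  intro L
  induction L with
  | nil => intro occ h; exact ⟨occ, rfl, by simp⟩
  | cons p L ih =>
    intro occ h
    simp only [List.length_cons] at h
    obtain ⟨s, hs, hsnot⟩ := circSpot_isSome (occ := occ) (by omega) p
    have hc : (insert s occ).card + L.length ≤ M := by
      rw [Finset.card_insert_of_notMem hsnot]; omega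
    obtain ⟨r, hr, hcard⟩ := ih (insert s occ) hc
    refine ⟨r, ?_, ?_⟩
    · rw [circPark, hs]; exact hr
    · rw [hcard, Finset.card_insert_of_notMem hsnot, List.length_cons]; omega

lemma circSpot_shift {M : ℕ} (occ : Finset (ZMod M)) (p c : ZMod M) :
    circSpot M (occ.image (· + c)) (p + c) = (circSpot M occ p).map (· + c) := by
  unfold circSpot
  have hlist : (List.range M).map (fun j : ℕ => p + c + (j : ZMod M))
      = ((List.range M).map (fun j : ℕ => p + (j : ZMod M))).map (· + c) := by
    rw [List.map_map]
    apply List.map_congr_left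
    intro j _
    simp [add_right_comm]
  rw [hlist, List.find?_map]
  have hpred : (fun s => decide (s ∉ occ.image (· + c))) ∘ (· + c)
      = fun s => decide (s ∉ occ) := by
    funext x
    simp only [Function.comp_apply, decide_eq_decide]
    constructor
    · intro hx hmem; exact hx (Finset.mem_image_of_mem _ hmem)
    · intro hx hmem
      obtain ⟨y, hy, heq⟩ := Finset.mem_image.1 hmem
      have : y = x := by
        have := add_right_cancel heq
        exact this
      exact hx (this ▸ hy)
  rw [hpred]

lemma circPark_shift {M : ℕ} (c : ZMod M) : ∀ (L : List (ZMod M)) (occ : Finset (ZMod M)),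
    circPark M (L.map (· + c)) (occ.image (· + c))
      = (circPark M L occ).map (Finset.image (· + c)) := by
  intro L
  induction L with
  | nil => intro occ; simp [circPark]
  | cons p L ih =>
    intro occ
    rcases hs : circSpot M occ p with _ | s
    · simp only [List.map_cons, circPark, circSpot_shift, hs, Option.map_none]
    · have himg : insert (s + c) (Finset.image (fun x => x + c) occ)
          = Finset.image (fun x => x + c) (insert s occ) := by
        simp [Finset.image_insert]
      simp only [List.map_cons, circPark, circSpot_shift, hs, Option.map_some]
      rw [himg]
      exact ih (insert s occ)

end Circ
section Bridge

lemma cast_inj_of_le {N : ℕ} {x y : ℕ} (hx : x ≤ N) (hy : y ≤ N)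
    (h : (x : ZMod (N+1)) = (y : ZMod (N+1))) : x = y := by
  have hx' := ZMod.val_cast_of_lt (show x < N+1 by omega)
  have hy' := ZMod.val_cast_of_lt (show y < N+1 by omega)
  rw [← hx', ← hy', h]

lemma bridge {N : ℕ} : ∀ (L : List ℕ), (∀ p ∈ L, 1 ≤ p ∧ p ≤ N) →
    ∀ occ : Finset ℕ, occ ⊆ Finset.Icc 1 N →
    (classicalPark N L occ).isSome →
    ∃ r, circPark (N+1) (L.map (Nat.cast : ℕ → ZMod (N+1)))
        (occ.image (Nat.cast : ℕ → ZMod (N+1))) = some r ∧ (0 : ZMod (N+1)) ∉ r := by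
  intro L
  induction L with
  | nil =>
    intro _ occ hsub _
    refine ⟨occ.image Nat.cast, rfl, ?_⟩
    intro hmem
    obtain ⟨y, hy, heq⟩ := Finset.mem_image.1 hmem
    have hyIcc := Finset.mem_Icc.1 (hsub hy)
    have : y = 0 := cast_inj_of_le hyIcc.2 (Nat.zero_le N) (by rw [Nat.cast_zero]; exact heq)
    omega
  | cons p L ih =>
    intro hL occ hsub hS
    obtain ⟨⟨hp1, hpN⟩, hL'⟩ : (1 ≤ p ∧ p ≤ N) ∧ ∀ q ∈ L, 1 ≤ q ∧ q ≤ N :=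
      ⟨hL p (by simp), fun q hq => hL q (by simp [hq])⟩
    rw [classicalPark] at hS
    rcases hfs : forwardSpot N occ p with _ | s
    · rw [hfs] at hS; simp at hS
    rw [hfs] at hS
    obtain ⟨hps, hsN, hs_not, hs_occ⟩ := forwardSpot_eq_some hfs
    have hcirc : circSpot (N+1) (occ.image (Nat.cast : ℕ → ZMod (N+1))) (p : ZMod (N+1))
        = some ((s : ℕ) : ZMod (N+1)) := by
      unfold circSpot
      rw [List.range_eq_range', List.find?_map]
      have hinner : (List.range' 0 (N+1)).find?
          ((fun t => decide (t ∉ occ.image (Nat.cast : ℕ → ZMod (N+1))))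
            ∘ (fun j : ℕ => (p : ZMod (N+1)) + (j : ZMod (N+1)))) = some (s - p) := by
        apply find?_range'_eq_some_of (by omega) (by omega)
        · simp only [Function.comp_apply, decide_eq_true_eq]
          have hcast : (p : ZMod (N+1)) + ((s - p : ℕ) : ZMod (N+1)) = ((s : ℕ) : ZMod (N+1)) := by
            rw [← Nat.cast_add]
            congr 1
            omega
          rw [hcast]
          intro hmem
          obtain ⟨y, hy, heq⟩ := Finset.mem_image.1 hmem
          have hyIcc := Finset.mem_Icc.1 (hsub hy)
          have : y = s := cast_inj_of_le (by omega) (by omega) heq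
          exact hs_not (this ▸ hy)
        · intro j _ hjs
          simp only [Function.comp_apply, decide_eq_false_iff_not, not_not]
          have hcast : (p : ZMod (N+1)) + ((j : ℕ) : ZMod (N+1)) = ((p + j : ℕ) : ZMod (N+1)) := by
            rw [← Nat.cast_add]
          rw [hcast]
          exact Finset.mem_image_of_mem _ (hs_occ (p+j) (by omega) (by omega))
      rw [hinner]
      simp only [Option.map_some]
      congr 1
      rw [← Nat.cast_add]
      congr 1
      omega
    obtain ⟨r, hr, h0⟩ := ih hL' (insert s occ) (by
      intro y hy
      rcases Finset.mem_insert.1 hy with rfl | hy'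
      · rw [Finset.mem_Icc]; omega
      · exact hsub hy') hS
    refine ⟨r, ?_, h0⟩
    rw [List.map_cons, circPark, hcirc]
    rw [Finset.image_insert] at hr
    exact hr

end Bridge
section Count

lemma Gcard (m k M : ℕ) [NeZero M] (hM : M = m + 1 + (k + 1)) :
    (Finset.univ.filter (fun v : Fin (m+1) → ZMod M =>
      (0 : ZMod M) ∉ (circPark M (List.ofFn v) ∅).getD Finset.univ)).card
      ≤ (k + 1) * M ^ m := by
  classical
  set pred : (Fin (m+1) → ZMod M) → Prop :=
    fun v => (0 : ZMod M) ∉ (circPark M (List.ofFn v) ∅).getD Finset.univ with hpred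
  set f : (Fin (m+1) → ZMod M) → (Fin (m+1) → ZMod M) := fun v => fun i => v i - v 0 with hf
  set t : Finset (Fin (m+1) → ZMod M) := Finset.univ.filter (fun w => w 0 = 0) with ht
  have hmapsto : ∀ v ∈ Finset.univ.filter pred, f v ∈ t := by
    intro v _
    rw [ht, Finset.mem_filter]
    exact ⟨Finset.mem_univ _, by simp [hf]⟩
  rw [Finset.card_eq_sum_card_fiberwise hmapsto]
  have hfiber : ∀ w ∈ t, ((Finset.univ.filter pred).filter (fun v => f v = w)).card ≤ k + 1 := by
    intro w hw
    -- inject into the set of shifts c with pred (w + c)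
    have hinj : ((Finset.univ.filter pred).filter (fun v => f v = w)).card
        ≤ (Finset.univ.filter (fun c : ZMod M => pred (fun i => w i + c))).card := by
      apply Finset.card_le_card_of_injOn (fun v => v 0)
      · intro v hv
        rw [Finset.mem_coe] at hv
        show v 0 ∈ Finset.univ.filter (fun c : ZMod M => pred (fun i => w i + c))
        rw [Finset.mem_filter] at hv ⊢
        obtain ⟨hv1, hv2⟩ := hv
        rw [Finset.mem_filter] at hv1
        have hvw : (fun i => w i + v 0) = v := by
          funext i
          rw [← hv2]
          simp [hf]
        rw [hvw]
        exact ⟨Finset.mem_univ _, hv1.2⟩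
      · intro v hv v' hv' heq
        simp only [Finset.coe_filter, Set.mem_setOf_eq] at hv hv'
        have hvw : (fun i => w i + v 0) = v := by
          funext i; rw [← hv.2]; simp [hf]
        have hvw' : (fun i => w i + v' 0) = v' := by
          funext i; rw [← hv'.2]; simp [hf]
        have heq' : v 0 = v' 0 := heq
        calc v = (fun i => w i + v 0) := hvw.symm
          _ = (fun i => w i + v' 0) := by funext i; rw [heq']
          _ = v' := hvw'
    -- now compute the shift set
    obtain ⟨r, hr, hrcard⟩ := circPark_total (List.ofFn w) ∅ (by simp; omega)
    have hshift : ∀ c : ZMod M, circPark M (List.ofFn (fun i => w i + c)) ∅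
        = some (r.image (· + c)) := by
      intro c
      have hofn : List.ofFn (fun i => w i + c) = (List.ofFn w).map (· + c) := by
        rw [List.map_ofFn]; rfl
      have hemp : (∅ : Finset (ZMod M)) = Finset.image (· + c) ∅ := by simp
      rw [hofn, hemp, circPark_shift, hr, Option.map_some]
    have hset : (Finset.univ.filter (fun c : ZMod M => pred (fun i => w i + c)))
        = Finset.univ.filter (fun c : ZMod M => -c ∉ r) := by
      apply Finset.filter_congr
      intro c _
      rw [hpred]
      simp only [hshift c, Option.getD_some]
      constructor
      · intro h0 hmem
        exact h0 (Finset.mem_image.2 ⟨-c, hmem, by ring⟩)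
      · intro hmem h0
        obtain ⟨y, hy, heq⟩ := Finset.mem_image.1 h0
        have : y = -c := by
          have : y + c = 0 := heq
          linear_combination this
        exact hmem (this ▸ hy)
    -- compute card of {c | -c ∉ r}
    have hcards : (Finset.univ.filter (fun c : ZMod M => -c ∈ r)).card
        + (Finset.univ.filter (fun c : ZMod M => ¬ -c ∈ r)).card = M := by
      rw [Finset.card_filter_add_card_filter_not, Finset.card_univ, ZMod.card]
    have hbij : (Finset.univ.filter (fun c : ZMod M => -c ∈ r)).card = r.card := by
      apply Finset.card_nbij' (fun c => -c) (fun x => -x)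
      · intro c hc
        exact (Finset.mem_filter.1 hc).2
      · intro x hx
        rw [Finset.mem_coe, Finset.mem_filter]
        exact ⟨Finset.mem_univ _, by simpa using hx⟩
      · intro c _; simp
      · intro x _; simp
    have hlen : r.card = m + 1 := by simpa using hrcard
    have : (Finset.univ.filter (fun c : ZMod M => ¬ -c ∈ r)).card = k + 1 := by omega
    calc ((Finset.univ.filter pred).filter (fun v => f v = w)).card
        ≤ (Finset.univ.filter (fun c : ZMod M => pred (fun i => w i + c))).card := hinj
      _ = (Finset.univ.filter (fun c : ZMod M => -c ∉ r)).card := congrArg Finset.card hset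
      _ = k + 1 := this
  calc ∑ w ∈ t, ((Finset.univ.filter pred).filter (fun v => f v = w)).card
      ≤ ∑ w ∈ t, (k + 1) := Finset.sum_le_sum hfiber
    _ = t.card * (k + 1) := by rw [Finset.sum_const, smul_eq_mul]
    _ = (k + 1) * M ^ m := by
        have htcard : t.card = M ^ m := by
          rw [ht]
          have := Finset.card_nbij' (fun w : Fin (m+1) → ZMod M => fun j : Fin m => w j.succ)
            (fun g : Fin m → ZMod M => Fin.cons 0 g)
            (s := Finset.univ.filter (fun w : Fin (m+1) → ZMod M => w 0 = 0))
            (t := Finset.univ)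
            (fun w _ => Finset.mem_univ _)
            (fun g _ => Finset.mem_filter.2 ⟨Finset.mem_univ _, by simp⟩)
            ?_ ?_
          · rw [this, Finset.card_univ]
            simp [ZMod.card]
          · intro w hw
            funext i
            cases i using Fin.cases with
            | zero => simpa using ((Finset.mem_filter.1 hw).2).symm
            | succ j => simp
          · intro g _
            funext j
            simp
        rw [htcard]; ring

end Count
section Assemble

lemma flatMap_pure_map {α β : Type*} (l : List α) (f : α → β) :
    (l.flatMap fun a => [f a]) = l.map f := by
  induction l with
  | nil => rfl
  | cons x l ih => simp [List.flatMap_cons, ih]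

lemma prefList_eq {m n : ℕ} (a : Fin m → Fin n) :
    prefList a = List.ofFn (fun i => (a i : ℕ) + 1) := by
  simp only [prefList, List.bind_eq_flatMap, List.pure_def]
  rw [flatMap_pure_map, List.map_map, List.map_ofFn]
  rfl

lemma mem_prefList {m n : ℕ} {a : Fin m → Fin n} {p : ℕ} (hp : p ∈ prefList a) :
    1 ≤ p ∧ p ≤ n := by
  rw [prefList_eq, List.mem_ofFn] at hp
  obtain ⟨i, rfl⟩ := hp
  have := (a i).isLt
  show 1 ≤ (a i : ℕ) + 1 ∧ (a i : ℕ) + 1 ≤ n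
  omega

lemma PF_card_bound (m k : ℕ) :
    (PFset (m+1) (m+1+k)).card ≤ (k + 1) * (m+1+k+1) ^ m := by
  classical
  haveI : NeZero (m+1+k+1) := ⟨by omega⟩
  refine le_trans ?_ (Gcard m k (m+1+k+1) (by omega))
  apply Finset.card_le_card_of_injOn
    (fun a => fun i : Fin (m+1) => (((a i : ℕ) + 1 : ℕ) : ZMod (m+1+k+1)))
  · intro a ha
    simp only [PFset, Finset.mem_coe, Finset.mem_filter] at ha
    rw [Finset.mem_coe, Finset.mem_filter]
    refine ⟨Finset.mem_univ _, ?_⟩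
    obtain ⟨r, hr, h0⟩ := bridge (N := m+1+k) (prefList a)
      (fun p hp => mem_prefList hp) ∅ (by simp) ha.2
    rw [Finset.image_empty] at hr
    have hofn : (prefList a).map (Nat.cast : ℕ → ZMod (m+1+k+1))
        = List.ofFn (fun i : Fin (m+1) => (((a i : ℕ) + 1 : ℕ) : ZMod (m+1+k+1))) := by
      rw [prefList_eq, List.map_ofFn]
      rfl
    rw [hofn] at hr
    rw [hr]
    simpa using h0
  · intro a ha b hb heq
    funext i
    have h1 : (((a i : ℕ) + 1 : ℕ) : ZMod (m+1+k+1)) = (((b i : ℕ) + 1 : ℕ) : ZMod (m+1+k+1)) :=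
      congrFun heq i
    have h2 : (a i : ℕ) + 1 = (b i : ℕ) + 1 := by
      have ha' := (a i).isLt
      have hb' := (b i).isLt
      exact cast_inj_of_le (N := m+1+k) (by omega) (by omega) h1
    exact Fin.ext (by omega)

lemma repPark {N n' c : ℕ} (hc : n' < c) (hcle : c ≤ N) :
    ∀ (mm j : ℕ), j + mm ≤ n' →
      (classicalPark N (List.replicate mm 1) (insert c (Finset.Icc 1 j))).isSome := by
  intro mm
  induction mm with
  | zero => intro j _; simp [classicalPark]
  | succ mm ih =>
    intro j hj
    rw [List.replicate_succ, classicalPark]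
    have hfs : forwardSpot N (insert c (Finset.Icc 1 j)) 1 = some (j+1) := by
      apply forwardSpot_eq_some_of (by omega) (by omega)
      · intro hmem
        rcases Finset.mem_insert.1 hmem with h | h
        · omega
        · rw [Finset.mem_Icc] at h; omega
      · intro y hy hyx
        apply Finset.mem_insert_of_mem
        rw [Finset.mem_Icc]; omega
    rw [hfs]
    show (classicalPark N (List.replicate mm 1) (insert (j+1) (insert c (Finset.Icc 1 j)))).isSome = true
    have hins : insert (j+1) (insert c (Finset.Icc 1 j)) = insert c (Finset.Icc 1 (j+1)) := by
      rw [Finset.insert_comm]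
      congr 1
      ext x
      simp only [Finset.mem_insert, Finset.mem_Icc]
      omega
    rw [hins]
    exact ih (j+1) (by omega)

end Assemble

theorem naples_upper_bound (n k : ℕ) (hn : 1 ≤ n) (hk : k ≤ n - 1) :
    (NPFset n n k).card ≤ (k + 1) * (k + n + 1) ^ (n - 1) ∧
      ((NPFset n n k).card = (k + 1) * (k + n + 1) ^ (n - 1) → k = 0) := by
  classical
  obtain ⟨m, rfl⟩ : ∃ m, n = m + 1 := ⟨n - 1, by omega⟩
  have hbase : k + (m+1) + 1 = m+1+k+1 := by ring
  have hm1 : m + 1 - 1 = m := by omega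
  rw [hbase, hm1]
  have hle : m + 1 ≤ m + 1 + k := by omega
  set ι : (Fin (m+1) → Fin (m+1)) → (Fin (m+1) → Fin (m+1+k)) :=
    fun a => Fin.castLE hle ∘ a with hι
  have hpref : ∀ a : Fin (m+1) → Fin (m+1), prefList (ι a) = prefList a := by
    intro a
    rw [prefList_eq, prefList_eq]
    congr 1
  have hsubset : (NPFset (m+1) (m+1) k).image ι ⊆ PFset (m+1) (m+1+k) := by
    intro x hx
    obtain ⟨a, ha, rfl⟩ := Finset.mem_image.1 hx
    simp only [NPFset, Finset.mem_filter] at ha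
    simp only [PFset, Finset.mem_filter]
    refine ⟨Finset.mem_univ _, ?_⟩
    rw [hpref a]
    apply naples_to_classical (m+1) k (prefList a)
      (fun p hp => mem_prefList hp) ∅ ∅ (by simp) (by simp) ha.2
  have hιinj : Function.Injective ι := by
    intro a b h
    funext i
    have := congrFun h i
    simp only [hι, Function.comp_apply] at this
    exact Fin.ext (by
      have := congrArg Fin.val this
      simpa using this)
  have hcardim : ((NPFset (m+1) (m+1) k).image ι).card = (NPFset (m+1) (m+1) k).card :=
    Finset.card_image_of_injective _ hιinj
  have hA : (NPFset (m+1) (m+1) k).card ≤ (PFset (m+1) (m+1+k)).card := by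
    rw [← hcardim]
    exact Finset.card_le_card hsubset
  have hB := PF_card_bound m k
  constructor
  · omega
  · intro heq
    by_contra hk0
    have hk1 : 1 ≤ k := by omega
    -- the witness outside the image
    set b : Fin (m+1) → Fin (m+1+k) :=
      Fin.cons ⟨m+1, by omega⟩ (fun _ => ⟨0, by omega⟩) with hb
    have hbPF : b ∈ PFset (m+1) (m+1+k) := by
      simp only [PFset, Finset.mem_filter]
      refine ⟨Finset.mem_univ _, ?_⟩
      have hblist : prefList b = (m+2) :: List.replicate m 1 := by
        rw [prefList_eq]
        have hfn : (fun i : Fin (m+1) => ((b i : ℕ) + 1))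
            = Fin.cons (m+2) (fun _ : Fin m => 1) := by
          funext i
          cases i using Fin.cases with
          | zero => simp [hb]
          | succ j => simp [hb]
        rw [hfn, List.ofFn_succ]
        simp [List.ofFn_const]
      rw [hblist, classicalPark]
      have hfs : forwardSpot (m+1+k) (∅ : Finset ℕ) (m+2) = some (m+2) := by
        apply forwardSpot_eq_some_of le_rfl (by omega) (by simp)
        intro y hy hyx; omega
      rw [hfs]
      show (classicalPark (m+1+k) (List.replicate m 1) (insert (m+2) (∅ : Finset ℕ))).isSome = true
      have hicc : insert (m+2) (∅ : Finset ℕ) = insert (m+2) (Finset.Icc 1 0) := by simp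
      rw [hicc]
      exact repPark (n' := m) (by omega) (by omega) m 0 (by omega)
    have hbnot : b ∉ (NPFset (m+1) (m+1) k).image ι := by
      intro hmem
      obtain ⟨a, _, heqb⟩ := Finset.mem_image.1 hmem
      have := congrFun heqb 0
      have hval := congrArg Fin.val this
      simp only [hι, Function.comp_apply, hb, Fin.cons_zero] at hval
      have := (a 0).isLt
      rw [Fin.coe_castLE] at hval
      omega
    have hss : (NPFset (m+1) (m+1) k).image ι ⊂ PFset (m+1) (m+1+k) :=
      (Finset.ssubset_iff_of_subset hsubset).2 ⟨b, hbPF, hbnot⟩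
    have := Finset.card_lt_card hss
    omega
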